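/- Let n ≥ 2 and m ≥ 2 and let μ_{n,m} be the two-stage sampling law associated with ν. Then the distributional variance estimator is unbiased: ∫ V̂ar_k^{(n,m)}(X) dμ_{n,m}(X) = Var_k(ν) = ∫ ⟨P|k|P⟩ dν(P) − ⟨join(ν)|k|join(ν)⟩. -/

import Mathlib

open MeasureTheory ProbabilityTheory

noncomputable section

/-- The σ-algebra on the space of probability measures induced from the σ-algebra on
`Measure Y` generated by the evaluation maps. -/
instance {Y : Type*} [MeasurableSpace Y] : MeasurableSpace (ProbabilityMeasure Y) :=
  MeasurableSpace.comap (fun P => (P : Measure Y)) inferInstance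

/-- The kernel bilinear form `⟨P|k|Q⟩ = ∫∫ k(x,y) dP(x) dQ(y)`. -/
def kerInner {Y : Type*} [MeasurableSpace Y] (k : Y → Y → ℝ) (P Q : Measure Y) : ℝ :=
  ∫ x, ∫ y, k x y ∂Q ∂P

/-- `join(ν)`: the probability measure `A ↦ ∫ P(A) dν(P)`. -/
def pmJoin {Y : Type*} [MeasurableSpace Y] (ν : Measure (ProbabilityMeasure Y)) : Measure Y :=
  ν.bind (fun P => (P : Measure Y))

/-- The two-stage sampling law `μ_{n,m}` on `Fin n → Fin m → Y`: sample
`P₁, …, Pₙ` i.i.d. from `ν`, then conditionally on `Pᵢ` sample `X_{i1}, …, X_{im}`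
i.i.d. from `Pᵢ`, independently across `i`. -/
def twoStage {Y : Type*} [MeasurableSpace Y] (ν : Measure (ProbabilityMeasure Y))
    (n m : ℕ) : Measure (Fin n → Fin m → Y) :=
  (Measure.pi fun _ : Fin n => ν).bind
    (fun Ps => Measure.pi fun i : Fin n => Measure.pi fun _ : Fin m => (Ps i : Measure Y))

/-- The distributional variance estimator
`V̂ar_k^{(n,m)}(X) = (1/(n m (m−1))) Σᵢ Σ_{j≠t} k(X_{ij}, X_{it})
  − (1/(n (n−1) m²)) Σ_{i≠s} Σ_{j,t} k(X_{ij}, X_{st})`. -/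
def varEst {Y : Type*} (k : Y → Y → ℝ) (n m : ℕ) (X : Fin n → Fin m → Y) : ℝ :=
  (1 / ((n : ℝ) * (m : ℝ) * ((m : ℝ) - 1))) *
      ∑ i, ∑ j, ∑ t ∈ Finset.univ.erase j, k (X i j) (X i t)
  - (1 / ((n : ℝ) * ((n : ℝ) - 1) * (m : ℝ) ^ 2)) *
      ∑ i, ∑ s ∈ Finset.univ.erase i, ∑ j, ∑ t, k (X i j) (X s t)

/-! ### Auxiliary lemmas -/

section Aux

open Set

lemma measurable_measure_pi {ι : Type*} [Fintype ι] {β Z : Type*} [MeasurableSpace β]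
    [MeasurableSpace Z] (μ : β → ι → Measure Z) (hμ : ∀ i, Measurable fun b => μ b i)
    (hp : ∀ b i, IsProbabilityMeasure (μ b i)) :
    Measurable fun b => Measure.pi (μ b) := by
  haveI : ∀ b, IsProbabilityMeasure (Measure.pi (μ b)) := fun b => by
    haveI := hp b; infer_instance
  apply Measure.measurable_of_measurable_coe
  intro s hs
  refine MeasurableSpace.induction_on_inter
    (C := fun s _ => Measurable fun b => Measure.pi (μ b) s)
    generateFrom_pi.symm isPiSystem_pi ?_ ?_ ?_ ?_ s hs
  · simp only [measure_empty]; exact measurable_const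
  · rintro _ ⟨A, hA, rfl⟩
    have : ∀ b, Measure.pi (μ b) (Set.pi univ A) = ∏ i, μ b i (A i) := fun b => by
      haveI := hp b
      exact Measure.pi_pi _ _
    simp_rw [this]
    exact Finset.measurable_prod _ fun i _ =>
      Measure.measurable_coe (hA i (mem_univ i)) |>.comp (hμ i)
  · intro t ht hC
    have : ∀ b, Measure.pi (μ b) tᶜ = 1 - Measure.pi (μ b) t := fun b => by
      rw [measure_compl ht (measure_ne_top _ _), measure_univ]
    simp_rw [this]
    exact Measurable.const_sub hC _
  · intro f hdisj hmeas hC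
    have : ∀ b, Measure.pi (μ b) (⋃ i, f i) = ∑' i, Measure.pi (μ b) (f i) := fun b =>
      measure_iUnion hdisj hmeas
    simp_rw [this]
    exact Measurable.ennreal_tsum hC

lemma map_eval_pi {ι : Type*} [Fintype ι] {Z : Type*} [MeasurableSpace Z]
    (μ : ι → Measure Z) [∀ i, IsProbabilityMeasure (μ i)] (i : ι) :
    (Measure.pi μ).map (Function.eval i) = μ i := by
  classical
  ext s hs
  rw [Measure.map_apply (measurable_pi_apply i) hs]
  have : Function.eval i ⁻¹' s = Set.pi univ (fun j => if j = i then s else univ) := by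
    ext x
    simp only [mem_preimage, mem_univ_pi, Function.eval]
    constructor
    · intro hx j
      by_cases h : j = i <;> simp [h, hx]
    · intro hx
      simpa using hx i
  rw [this, Measure.pi_pi, Finset.prod_eq_single i]
  · simp
  · intro j _ hj; simp [hj]
  · simp

lemma map_pair_pi {ι : Type*} [Fintype ι] {Z : Type*} [MeasurableSpace Z]
    (μ : ι → Measure Z) [∀ i, IsProbabilityMeasure (μ i)] {i s : ι} (his : i ≠ s) :
    (Measure.pi μ).map (fun x => (x i, x s)) = (μ i).prod (μ s) := by
  classical
  have hmeas : Measurable fun x : ∀ _ : ι, Z => (x i, x s) :=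
    (measurable_pi_apply i).prodMk (measurable_pi_apply s)
  refine (Measure.prod_eq fun u v hu hv => ?_).symm
  rw [Measure.map_apply hmeas (hu.prod hv)]
  have hpre : (fun x : ∀ _ : ι, Z => (x i, x s)) ⁻¹' (u ×ˢ v)
      = Set.pi univ (fun j => if j = i then u else if j = s then v else univ) := by
    ext x
    simp only [mem_preimage, mem_prod, mem_univ_pi]
    constructor
    · intro hx j
      by_cases h1 : j = i
      · subst h1; simp [his, hx.1]
      · by_cases h2 : j = s
        · subst h2; simp [h1, hx.2]
        · simp [h1, h2]
    · intro hx
      refine ⟨?_, ?_⟩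
      · simpa [his] using hx i
      · simpa [his.symm] using hx s
  rw [hpre, Measure.pi_pi]
  have : ∀ j, μ j (if j = i then u else if j = s then v else univ)
      = (if j = i then μ i u else 1) * (if j = s then μ s v else 1) := by
    intro j
    by_cases h1 : j = i
    · subst h1; simp [his]
    · by_cases h2 : j = s
      · subst h2; simp [h1]
      · simp [h1, h2]
  simp_rw [this, Finset.prod_mul_distrib, Finset.prod_ite_eq' Finset.univ,
    Finset.mem_univ, if_true]

lemma integrable_of_bound {α : Type*} [MeasurableSpace α] (μ : Measure α) [IsFiniteMeasure μ]
    (f : α → ℝ) (hf : AEStronglyMeasurable f μ) (C : ℝ) (h : ∀ a, |f a| ≤ C) :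
    Integrable f μ :=
  ⟨hf, HasFiniteIntegral.of_bounded (C := C) (ae_of_all _ fun a => by
    simpa [Real.norm_eq_abs] using h a)⟩

lemma abs_integral_le_of_bound {α : Type*} [MeasurableSpace α] (μ : Measure α)
    [IsProbabilityMeasure μ] (f : α → ℝ) (C : ℝ) (h : ∀ a, |f a| ≤ C) :
    |∫ a, f a ∂μ| ≤ C := by
  have := norm_integral_le_of_norm_le_const (μ := μ) (f := f) (C := C)
    (ae_of_all _ fun a => by simpa [Real.norm_eq_abs] using h a)
  simpa [Real.norm_eq_abs, measure_univ] using this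

lemma integral_eval_pi {ι : Type*} [Fintype ι] {Z : Type*} [MeasurableSpace Z]
    (μ : ι → Measure Z) [∀ i, IsProbabilityMeasure (μ i)] (i : ι)
    (f : Z → ℝ) (hf : AEStronglyMeasurable f (μ i)) :
    ∫ x, f (x i) ∂(Measure.pi μ) = ∫ z, f z ∂(μ i) := by
  conv_rhs => rw [← map_eval_pi μ i]
  rw [integral_map (measurable_pi_apply i).aemeasurable (by rwa [map_eval_pi])]

lemma integral_pair_pi {ι : Type*} [Fintype ι] {Z : Type*} [MeasurableSpace Z]
    (μ : ι → Measure Z) [∀ i, IsProbabilityMeasure (μ i)] {i s : ι} (his : i ≠ s)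
    (f : Z → Z → ℝ) (hf : Measurable (Function.uncurry f)) (C : ℝ)
    (hC : ∀ x y, |f x y| ≤ C) :
    ∫ x, f (x i) (x s) ∂(Measure.pi μ) = ∫ z, ∫ w, f z w ∂(μ s) ∂(μ i) := by
  have hint : Integrable (Function.uncurry f) ((μ i).prod (μ s)) :=
    integrable_of_bound _ _ hf.aestronglyMeasurable C fun p => hC p.1 p.2
  have hmeas : Measurable fun x : ∀ _ : ι, Z => (x i, x s) :=
    (measurable_pi_apply i).prodMk (measurable_pi_apply s)
  calc ∫ x, f (x i) (x s) ∂(Measure.pi μ)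
      = ∫ p, Function.uncurry f p ∂((μ i).prod (μ s)) := by
        rw [← map_pair_pi μ his,
          integral_map hmeas.aemeasurable (by rw [map_pair_pi μ his]; exact hint.1)]
        rfl
    _ = ∫ z, ∫ w, f z w ∂(μ s) ∂(μ i) := integral_prod _ hint

lemma isProbabilityMeasure_bind {α β : Type*} [MeasurableSpace α] [MeasurableSpace β]
    (μ : Measure α) [IsProbabilityMeasure μ] (κ : α → Measure β) (hκ : Measurable κ)
    (hκp : ∀ a, IsProbabilityMeasure (κ a)) : IsProbabilityMeasure (μ.bind κ) := by
  constructor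
  rw [Measure.bind_apply MeasurableSet.univ hκ.aemeasurable]
  simp [measure_univ]

lemma integral_bind' {α β : Type*} [MeasurableSpace α] [MeasurableSpace β]
    (μ : Measure α) [IsProbabilityMeasure μ] (κ : α → Measure β) (hκ : Measurable κ)
    (hκp : ∀ a, IsProbabilityMeasure (κ a)) (f : β → ℝ) (hf : Measurable f)
    (C : ℝ) (hC : ∀ b, |f b| ≤ C) :
    ∫ b, f b ∂(μ.bind κ) = ∫ a, ∫ b, f b ∂(κ a) ∂μ := by
  set K : Kernel α β := ⟨κ, hκ⟩ with hK
  haveI : IsMarkovKernel K := ⟨hκp⟩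
  have hbind : μ.bind κ = (μ.compProd K).map Prod.snd := by
    ext s hs
    rw [Measure.map_apply measurable_snd hs, Measure.bind_apply hs hκ.aemeasurable,
      Measure.compProd_apply (measurable_snd hs)]
    rfl
  have hint : Integrable (fun p : α × β => f p.2) (μ.compProd K) :=
    integrable_of_bound _ _ (hf.comp measurable_snd).aestronglyMeasurable C fun p => hC p.2
  rw [hbind, integral_map measurable_snd.aemeasurable hf.aestronglyMeasurable,
    Measure.integral_compProd hint]
  rfl

variable {Y : Type*} [MeasurableSpace Y]

lemma measurable_pm_coe : Measurable (fun P : ProbabilityMeasure Y => (P : Measure Y)) :=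
  measurable_iff_comap_le.mpr le_rfl

/-- The coercion kernel from `ProbabilityMeasure Y` to `Y`. -/
def pmKernel (Y : Type*) [MeasurableSpace Y] : Kernel (ProbabilityMeasure Y) Y :=
  ⟨fun P => (P : Measure Y), measurable_pm_coe⟩

instance : IsMarkovKernel (pmKernel Y) := ⟨fun P => P.2⟩

lemma measurable_inner_int {k : Y → Y → ℝ} (hk : Measurable fun p : Y × Y => k p.1 p.2) :
    Measurable fun q : ProbabilityMeasure Y × Y => ∫ y, k q.2 y ∂(q.1 : Measure Y) := by
  have : Measurable fun r : (ProbabilityMeasure Y × Y) × Y => k r.1.2 r.2 :=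
    hk.comp (measurable_fst.snd.prodMk measurable_snd)
  have h := this.stronglyMeasurable.integral_kernel_prod_right'
    (κ := (pmKernel Y).comap Prod.fst measurable_fst)
  simpa [Kernel.comap_apply, pmKernel] using h.measurable

lemma measurable_int_right {k : Y → Y → ℝ} (hk : Measurable fun p : Y × Y => k p.1 p.2)
    (Q : Measure Y) [SFinite Q] : Measurable fun x => ∫ y, k x y ∂Q := by
  have h := hk.stronglyMeasurable.integral_kernel_prod_right' (κ := Kernel.const Y Q)
  simpa [Kernel.const_apply] using h.measurable

lemma measurable_kerInner_pair {k : Y → Y → ℝ}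
    (hk : Measurable fun p : Y × Y => k p.1 p.2) :
    Measurable fun pq : ProbabilityMeasure Y × ProbabilityMeasure Y =>
      kerInner k (pq.1 : Measure Y) (pq.2 : Measure Y) := by
  have h1 : Measurable fun r : (ProbabilityMeasure Y × ProbabilityMeasure Y) × Y =>
      ∫ y, k r.2 y ∂((r.1.2 : ProbabilityMeasure Y) : Measure Y) :=
    (measurable_inner_int hk).comp (measurable_fst.snd.prodMk measurable_snd)
  have h := h1.stronglyMeasurable.integral_kernel_prod_right'
    (κ := (pmKernel Y).comap Prod.fst measurable_fst)
  simpa [Kernel.comap_apply, pmKernel, kerInner] using h.measurable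

lemma measurable_kerInner_diag {k : Y → Y → ℝ}
    (hk : Measurable fun p : Y × Y => k p.1 p.2) :
    Measurable fun P : ProbabilityMeasure Y => kerInner k (P : Measure Y) (P : Measure Y) :=
  (measurable_kerInner_pair hk).comp (measurable_id.prodMk measurable_id)

lemma kerInner_bound {k : Y → Y → ℝ} (C : ℝ) (hC : ∀ x y, |k x y| ≤ C)
    (P Q : Measure Y) [IsProbabilityMeasure P] [IsProbabilityMeasure Q] :
    |kerInner k P Q| ≤ C :=
  abs_integral_le_of_bound P _ C fun x => abs_integral_le_of_bound Q _ C (hC x)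

end Aux

/-- Unbiasedness of the distributional variance estimator:
`E_{μ_{n,m}}[V̂ar_k^{(n,m)}] = Var_k(ν) = ∫ ⟨P|k|P⟩ dν(P) − ⟨join(ν)|k|join(ν)⟩`. -/
theorem varEst_unbiased
    {Y : Type*} [MeasurableSpace Y]
    (k : Y → Y → ℝ)
    (hk_meas : Measurable fun p : Y × Y => k p.1 p.2)
    (hk_symm : ∀ x y, k x y = k y x)
    (hk_bdd : ∃ K, ∀ x y, |k x y| ≤ K)
    (hk_psd : ∀ (N : ℕ) (x : Fin N → Y) (a : Fin N → ℝ),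
      0 ≤ ∑ i, ∑ j, a i * k (x i) (x j) * a j)
    (ν : Measure (ProbabilityMeasure Y)) [IsProbabilityMeasure ν]
    (n m : ℕ) (hn : 2 ≤ n) (hm : 2 ≤ m) :
    ∫ X, varEst k n m X ∂(twoStage ν n m)
      = (∫ P, kerInner k (P : Measure Y) (P : Measure Y) ∂ν)
        - kerInner k (pmJoin ν) (pmJoin ν) := by
  classical
  obtain ⟨K0, hK0⟩ := hk_bdd
  set C : ℝ := max K0 0 with hCdef
  have hC : ∀ x y, |k x y| ≤ C := fun x y => (hK0 x y).trans (le_max_left _ _)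
  -- notation
  set piν : Measure (Fin n → ProbabilityMeasure Y) := Measure.pi fun _ : Fin n => ν with hpiν
  set κn : (Fin n → ProbabilityMeasure Y) → Measure (Fin n → Fin m → Y) :=
    fun Ps => Measure.pi fun i : Fin n => Measure.pi fun _ : Fin m => (Ps i : Measure Y)
    with hκn
  have hκn_meas : Measurable κn := by
    apply measurable_measure_pi
    · intro i
      apply measurable_measure_pi
      · intro _
        exact measurable_pm_coe.comp (measurable_pi_apply i)
      · intro b _; exact (b i).2
    · intro b i; infer_instance
  have hκn_prob : ∀ Ps, IsProbabilityMeasure (κn Ps) := fun Ps => by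
    simp only [hκn]; infer_instance
  haveI : IsProbabilityMeasure (twoStage ν n m) :=
    isProbabilityMeasure_bind piν κn hκn_meas hκn_prob
  -- measurability of individual summands
  have hterm_meas : ∀ (i s : Fin n) (j t : Fin m),
      Measurable fun X : Fin n → Fin m → Y => k (X i j) (X s t) := by
    intro i s j t
    have h1 : Measurable fun X : Fin n → Fin m → Y => (X i j, X s t) :=
      ((measurable_pi_apply j).comp (measurable_pi_apply i)).prodMk
        ((measurable_pi_apply t).comp (measurable_pi_apply s))
    exact hk_meas.comp h1
  have hterm_int : ∀ (i s : Fin n) (j t : Fin m),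
      Integrable (fun X => k (X i j) (X s t)) (twoStage ν n m) := fun i s j t =>
    integrable_of_bound _ _ (hterm_meas i s j t).aestronglyMeasurable C fun X => hC _ _
  -- the two expectation computations
  set A : ℝ := ∫ P, kerInner k (P : Measure Y) (P : Measure Y) ∂ν with hA
  set B : ℝ := ∫ P, ∫ Q,
      kerInner k ((P : ProbabilityMeasure Y) : Measure Y)
        ((Q : ProbabilityMeasure Y) : Measure Y) ∂ν ∂ν with hB
  have hE1 : ∀ (i : Fin n) (j t : Fin m), j ≠ t →
      ∫ X, k (X i j) (X i t) ∂(twoStage ν n m) = A := by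
    intro i j t hjt
    rw [twoStage, integral_bind' piν κn hκn_meas hκn_prob _ (hterm_meas i i j t) C
      (fun X => hC _ _)]
    have inner : ∀ Ps : Fin n → ProbabilityMeasure Y,
        ∫ X, k (X i j) (X i t) ∂(κn Ps)
          = kerInner k (Ps i : Measure Y) (Ps i : Measure Y) := by
      intro Ps
      have step1 : ∫ X, k (X i j) (X i t) ∂(κn Ps)
          = ∫ x : Fin m → Y, k (x j) (x t) ∂(Measure.pi fun _ : Fin m => (Ps i : Measure Y)) :=
        integral_eval_pi (fun i => Measure.pi fun _ : Fin m => (Ps i : Measure Y)) i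
          (fun x => k (x j) (x t))
          (by
            have h1 : Measurable fun x : Fin m → Y => (x j, x t) :=
              (measurable_pi_apply j).prodMk (measurable_pi_apply t)
            exact (hk_meas.comp h1).aestronglyMeasurable)
      rw [step1]
      exact integral_pair_pi (fun _ : Fin m => (Ps i : Measure Y)) hjt k hk_meas C hC
    rw [integral_congr_ae (ae_of_all _ inner)]
    exact integral_eval_pi (fun _ : Fin n => ν) i
      (fun P : ProbabilityMeasure Y => kerInner k (P : Measure Y) (P : Measure Y))
      (measurable_kerInner_diag hk_meas).aestronglyMeasurable
  have hE2 : ∀ (i s : Fin n) (j t : Fin m), i ≠ s →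
      ∫ X, k (X i j) (X s t) ∂(twoStage ν n m) = B := by
    intro i s j t his
    rw [twoStage, integral_bind' piν κn hκn_meas hκn_prob _ (hterm_meas i s j t) C
      (fun X => hC _ _)]
    have inner : ∀ Ps : Fin n → ProbabilityMeasure Y,
        ∫ X, k (X i j) (X s t) ∂(κn Ps)
          = kerInner k (Ps i : Measure Y) (Ps s : Measure Y) := by
      intro Ps
      have hG : Measurable (Function.uncurry
          fun (a b : Fin m → Y) => k (a j) (b t)) := by
        have h1 : Measurable fun p : (Fin m → Y) × (Fin m → Y) => (p.1 j, p.2 t) :=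
          ((measurable_pi_apply j).comp measurable_fst).prodMk
            ((measurable_pi_apply t).comp measurable_snd)
        exact hk_meas.comp h1
      have step1 : ∫ X, k (X i j) (X s t) ∂(κn Ps)
          = ∫ a, ∫ b, k (a j) (b t)
              ∂(Measure.pi fun _ : Fin m => (Ps s : Measure Y))
              ∂(Measure.pi fun _ : Fin m => (Ps i : Measure Y)) :=
        integral_pair_pi (fun i => Measure.pi fun _ : Fin m => (Ps i : Measure Y)) his
          (fun a b => k (a j) (b t)) hG C (fun a b => hC _ _)
      rw [step1]
      have step2 : ∀ a : Fin m → Y,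
          ∫ b, k (a j) (b t) ∂(Measure.pi fun _ : Fin m => (Ps s : Measure Y))
            = ∫ w, k (a j) w ∂(Ps s : Measure Y) := fun a =>
        integral_eval_pi (fun _ : Fin m => (Ps s : Measure Y)) t (fun w => k (a j) w)
          (by
            have h1 : Measurable fun w : Y => (a j, w) :=
              measurable_const.prodMk measurable_id
            exact (hk_meas.comp h1).aestronglyMeasurable)
      rw [integral_congr_ae (ae_of_all _ step2)]
      exact integral_eval_pi (fun _ : Fin m => (Ps i : Measure Y)) j
        (fun z => ∫ w, k z w ∂(Ps s : Measure Y))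
        (measurable_int_right hk_meas _).aestronglyMeasurable
    rw [integral_congr_ae (ae_of_all _ inner)]
    exact integral_pair_pi (fun _ : Fin n => ν) his
      (fun P Q : ProbabilityMeasure Y => kerInner k (P : Measure Y) (Q : Measure Y))
      (measurable_kerInner_pair hk_meas) C
      (fun P Q => kerInner_bound C hC _ _)
  -- identification of the joined inner product
  haveI hJprob : IsProbabilityMeasure (pmJoin ν) :=
    isProbabilityMeasure_bind ν _ measurable_pm_coe (fun P => P.2)
  have hJ : kerInner k (pmJoin ν) (pmJoin ν) = B := by
    have h1 : ∀ x, (∫ y, k x y ∂(pmJoin ν))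
        = ∫ Q : ProbabilityMeasure Y, ∫ y, k x y ∂(Q : Measure Y) ∂ν := fun x =>
      integral_bind' ν _ measurable_pm_coe (fun P => P.2) (fun y => k x y)
        (hk_meas.comp (measurable_const.prodMk measurable_id)) C (hC x)
    have hg_meas : Measurable fun x => ∫ y, k x y ∂(pmJoin ν) :=
      measurable_int_right hk_meas _
    have h2 : kerInner k (pmJoin ν) (pmJoin ν)
        = ∫ P : ProbabilityMeasure Y, ∫ x, (∫ y, k x y ∂(pmJoin ν)) ∂(P : Measure Y) ∂ν :=
      integral_bind' ν _ measurable_pm_coe (fun P => P.2) _ hg_meas C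
        (fun x => abs_integral_le_of_bound _ _ C (hC x))
    rw [h2]
    refine integral_congr_ae (ae_of_all _ fun P => ?_)
    show ∫ x, (∫ y, k x y ∂(pmJoin ν)) ∂(P : Measure Y)
        = ∫ Q : ProbabilityMeasure Y, kerInner k (P : Measure Y) (Q : Measure Y) ∂ν
    have h3 : ∀ x : Y, (∫ y, k x y ∂(pmJoin ν))
        = ∫ Q : ProbabilityMeasure Y, ∫ y, k x y ∂(Q : Measure Y) ∂ν := h1
    rw [integral_congr_ae (ae_of_all _ h3)]
    have hswap : ∫ x, ∫ Q : ProbabilityMeasure Y, ∫ y, k x y ∂(Q : Measure Y) ∂ν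
          ∂(P : Measure Y)
        = ∫ Q : ProbabilityMeasure Y, ∫ x, ∫ y, k x y ∂(Q : Measure Y) ∂(P : Measure Y) ∂ν := by
      apply integral_integral_swap
      apply integrable_of_bound _ _ _ C
      · exact fun p => abs_integral_le_of_bound _ _ C (hC p.1)
      · exact ((measurable_inner_int hk_meas).comp measurable_swap).aestronglyMeasurable
    rw [hswap]
    try rfl
  -- assembling the sums
  have hsum1 : ∫ X, (∑ i, ∑ j, ∑ t ∈ Finset.univ.erase j, k (X i j) (X i t))
      ∂(twoStage ν n m) = (n : ℝ) * ((m : ℝ) * (((m : ℝ) - 1) * A)) := by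
    rw [integral_finset_sum _ fun i _ => integrable_finset_sum _ fun j _ =>
      integrable_finset_sum _ fun t _ => hterm_int i i j t]
    have : ∀ i : Fin n, ∀ j : Fin m,
        ∑ t ∈ Finset.univ.erase j, ∫ X, k (X i j) (X i t) ∂(twoStage ν n m)
          = ((m : ℝ) - 1) * A := by
      intro i j
      rw [Finset.sum_congr rfl (fun t ht => hE1 i j t
        (Ne.symm (Finset.mem_erase.mp ht).1)), Finset.sum_const,
        Finset.card_erase_of_mem (Finset.mem_univ j), Finset.card_univ, Fintype.card_fin,
        nsmul_eq_mul, Nat.cast_sub (by omega), Nat.cast_one]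
    calc ∑ i : Fin n, ∫ X, (∑ j, ∑ t ∈ Finset.univ.erase j, k (X i j) (X i t))
          ∂(twoStage ν n m)
        = ∑ i : Fin n, ∑ j : Fin m, ∫ X, (∑ t ∈ Finset.univ.erase j, k (X i j) (X i t))
            ∂(twoStage ν n m) := by
          refine Finset.sum_congr rfl fun i _ => ?_
          exact integral_finset_sum _ fun j _ =>
            integrable_finset_sum _ fun t _ => hterm_int i i j t
      _ = ∑ i : Fin n, ∑ j : Fin m,
            ∑ t ∈ Finset.univ.erase j, ∫ X, k (X i j) (X i t) ∂(twoStage ν n m) := by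
          refine Finset.sum_congr rfl fun i _ => Finset.sum_congr rfl fun j _ => ?_
          exact integral_finset_sum _ fun t _ => hterm_int i i j t
      _ = ∑ i : Fin n, ∑ j : Fin m, ((m : ℝ) - 1) * A := by
          refine Finset.sum_congr rfl fun i _ => Finset.sum_congr rfl fun j _ => this i j
      _ = (n : ℝ) * ((m : ℝ) * (((m : ℝ) - 1) * A)) := by
          simp [Finset.sum_const, Finset.card_univ, nsmul_eq_mul]
          try ring
  have hsum2 : ∫ X, (∑ i, ∑ s ∈ Finset.univ.erase i, ∑ j, ∑ t, k (X i j) (X s t))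
      ∂(twoStage ν n m) = (n : ℝ) * (((n : ℝ) - 1) * ((m : ℝ) * ((m : ℝ) * B))) := by
    rw [integral_finset_sum _ fun i _ => integrable_finset_sum _ fun s _ =>
      integrable_finset_sum _ fun j _ => integrable_finset_sum _ fun t _ => hterm_int i s j t]
    calc ∑ i : Fin n, ∫ X, (∑ s ∈ Finset.univ.erase i, ∑ j, ∑ t, k (X i j) (X s t))
          ∂(twoStage ν n m)
        = ∑ i : Fin n, ∑ s ∈ Finset.univ.erase i, ∑ j : Fin m, ∑ t : Fin m,
            ∫ X, k (X i j) (X s t) ∂(twoStage ν n m) := by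
          refine Finset.sum_congr rfl fun i _ => ?_
          rw [integral_finset_sum _ fun s _ => integrable_finset_sum _ fun j _ =>
            integrable_finset_sum _ fun t _ => hterm_int i s j t]
          refine Finset.sum_congr rfl fun s _ => ?_
          rw [integral_finset_sum _ fun j _ => integrable_finset_sum _ fun t _ =>
            hterm_int i s j t]
          refine Finset.sum_congr rfl fun j _ => ?_
          exact integral_finset_sum _ fun t _ => hterm_int i s j t
      _ = ∑ i : Fin n, ∑ s ∈ Finset.univ.erase i, ∑ j : Fin m, ∑ t : Fin m, B := by
          refine Finset.sum_congr rfl fun i _ => Finset.sum_congr rfl fun s hs =>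
            Finset.sum_congr rfl fun j _ => Finset.sum_congr rfl fun t _ => ?_
          exact hE2 i s j t (Ne.symm (Finset.mem_erase.mp hs).1)
      _ = (n : ℝ) * (((n : ℝ) - 1) * ((m : ℝ) * ((m : ℝ) * B))) := by
          simp [Finset.sum_const, Finset.card_univ, Finset.card_erase_of_mem,
            nsmul_eq_mul, Nat.cast_sub (show 1 ≤ n by omega)]
          try ring
  -- final computation
  have hF_int : Integrable
      (fun X : Fin n → Fin m → Y => ∑ i, ∑ j, ∑ t ∈ Finset.univ.erase j, k (X i j) (X i t))
      (twoStage ν n m) :=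
    integrable_finset_sum _ fun i _ => integrable_finset_sum _ fun j _ =>
      integrable_finset_sum _ fun t _ => hterm_int i i j t
  have hG_int : Integrable
      (fun X : Fin n → Fin m → Y =>
        ∑ i, ∑ s ∈ Finset.univ.erase i, ∑ j, ∑ t, k (X i j) (X s t))
      (twoStage ν n m) :=
    integrable_finset_sum _ fun i _ => integrable_finset_sum _ fun s _ =>
      integrable_finset_sum _ fun j _ => integrable_finset_sum _ fun t _ => hterm_int i s j t
  have hsplit : ∫ X, varEst k n m X ∂(twoStage ν n m)
      = (1 / ((n : ℝ) * (m : ℝ) * ((m : ℝ) - 1))) *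
          ∫ X, (∑ i, ∑ j, ∑ t ∈ Finset.univ.erase j, k (X i j) (X i t)) ∂(twoStage ν n m)
        - (1 / ((n : ℝ) * ((n : ℝ) - 1) * (m : ℝ) ^ 2)) *
          ∫ X, (∑ i, ∑ s ∈ Finset.univ.erase i, ∑ j, ∑ t, k (X i j) (X s t))
            ∂(twoStage ν n m) := by
    unfold varEst
    rw [integral_sub (hF_int.const_mul _) (hG_int.const_mul _),
      integral_const_mul, integral_const_mul]
  rw [hsplit, hsum1, hsum2, hJ]
  have hn0 : (n : ℝ) ≠ 0 := by positivity
  have hm0 : (m : ℝ) ≠ 0 := by positivity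
  have hn1 : (n : ℝ) - 1 ≠ 0 := by
    have : (2 : ℝ) ≤ (n : ℝ) := by exact_mod_cast hn
    nlinarith
  have hm1 : (m : ℝ) - 1 ≠ 0 := by
    have : (2 : ℝ) ≤ (m : ℝ) := by exact_mod_cast hm
    nlinarith
  field_simp
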